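/- For all n ≥ 1 and integers r ≥ 3, with B^{−2}_s = 2·3^s − 2^s, one has p^3_1(n) = Σ_{s=1}^{n} C(n,s) (−1)^{s+1} B^{−2}_s · p^3_1(n−s). -/

import Mathlib

/-- `p r j n` : the number of restricted barred preferential arrangements of an `n`-set with
`r` restricted sections and `j` free sections, given by the convergent series
`p^r_j(n) = \sum_{s=0}^\infty C(j+s-1, s) (r+s)^n / 2^(j+s)`
(the coefficient of `m^n/n!` in `e^{rm}/(2-e^m)^j`). -/
noncomputable def p (r j n : ℕ) : ℝ :=
  ∑' s : ℕ, ((j + s - 1).choose s : ℝ) * ((r + s : ℕ) : ℝ) ^ n / 2 ^ (j + s)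

lemma sumg (m : ℕ) : Summable (fun k : ℕ => (k : ℝ) ^ m / 2 ^ k) := by
  have h := summable_pow_mul_geometric_of_norm_lt_one (k := m) (r := (1/2 : ℝ))
    (by norm_num [Real.norm_eq_abs, abs_of_pos])
  refine h.congr fun k => ?_
  rw [div_pow, one_pow, div_eq_mul_inv, ← div_eq_mul_inv]
  ring

lemma sumq (m : ℕ) : Summable (fun k : ℕ => ((3 + k : ℕ) : ℝ) ^ m / 2 ^ (k + 1)) := by
  have h := ((summable_nat_add_iff (f := fun k : ℕ => (k : ℝ) ^ m / 2 ^ k) 3).mpr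
    (sumg m)).mul_right 4
  refine h.congr fun k => ?_
  push_cast
  rw [pow_add]
  ring_nf

lemma sumq1 (m : ℕ) : Summable (fun k : ℕ => ((1 + k : ℕ) : ℝ) ^ m / 2 ^ (k + 1)) := by
  have h := (summable_nat_add_iff (f := fun k : ℕ => (k : ℝ) ^ m / 2 ^ k) 1).mpr (sumg m)
  refine h.congr fun k => ?_
  push_cast
  ring_nf

lemma hp (m : ℕ) : p 3 1 m = ∑' k : ℕ, ((3 + k : ℕ) : ℝ) ^ m / 2 ^ (k + 1) := by
  unfold p
  refine tsum_congr fun k => ?_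
  simp [Nat.add_sub_cancel_left, add_comm 1 k]

lemma key (n : ℕ) (x : ℝ) :
    ∑ s ∈ Finset.Icc 1 n,
        (n.choose s : ℝ) * (-1) ^ (s + 1) * (2 * 3 ^ s - 2 ^ s) * (3 + x) ^ (n - s)
      = (3 + x) ^ n + (1 + x) ^ n - 2 * x ^ n := by
  have hA : ∑ s ∈ Finset.range (n + 1),
      (n.choose s : ℝ) * (-1) ^ s * (2 * 3 ^ s - 2 ^ s) * (3 + x) ^ (n - s)
      = 2 * x ^ n - (1 + x) ^ n := by
    have h3 := add_pow (-3 : ℝ) (3 + x) n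
    have h2 := add_pow (-2 : ℝ) (3 + x) n
    rw [show (-3 : ℝ) + (3 + x) = x by ring] at h3
    rw [show (-2 : ℝ) + (3 + x) = 1 + x by ring] at h2
    rw [h3, h2, Finset.mul_sum, ← Finset.sum_sub_distrib]
    refine Finset.sum_congr rfl fun s _ => ?_
    have e3 : (-3 : ℝ) ^ s = (-1) ^ s * 3 ^ s := by rw [← neg_one_mul, mul_pow]
    have e2 : (-2 : ℝ) ^ s = (-1) ^ s * 2 ^ s := by rw [← neg_one_mul, mul_pow]
    rw [e3, e2]
    ring
  have hins : Finset.range (n + 1) = insert 0 (Finset.Icc 1 n) := by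
    ext s; simp; omega
  rw [hins, Finset.sum_insert (by simp)] at hA
  norm_num at hA
  have hB : ∑ s ∈ Finset.Icc 1 n,
      (n.choose s : ℝ) * (-1) ^ (s + 1) * (2 * 3 ^ s - 2 ^ s) * (3 + x) ^ (n - s)
      = -∑ s ∈ Finset.Icc 1 n,
        (n.choose s : ℝ) * (-1) ^ s * (2 * 3 ^ s - 2 ^ s) * (3 + x) ^ (n - s) := by
    rw [← Finset.sum_neg_distrib]
    exact Finset.sum_congr rfl fun s _ => by rw [pow_succ]; ring
  rw [hB]
  linarith

/-- `B^{-2}_s = 2·3^s - 2^s` is the poly-Bernoulli number of index `-2`. -/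
theorem stmt11 (n : ℕ) (hn : 1 ≤ n) :
    p 3 1 n = ∑ s ∈ Finset.Icc 1 n,
      (n.choose s : ℝ) * (-1) ^ (s + 1) * (2 * 3 ^ s - 2 ^ s) * p 3 1 (n - s) := by
  -- Rewrite each p as a tsum and pull the constants inside
  have step1 : ∑ s ∈ Finset.Icc 1 n,
      (n.choose s : ℝ) * (-1) ^ (s + 1) * (2 * 3 ^ s - 2 ^ s) * p 3 1 (n - s)
      = ∑ s ∈ Finset.Icc 1 n, ∑' k : ℕ,
        (n.choose s : ℝ) * (-1) ^ (s + 1) * (2 * 3 ^ s - 2 ^ s) *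
          (((3 + k : ℕ) : ℝ) ^ (n - s) / 2 ^ (k + 1)) := by
    refine Finset.sum_congr rfl fun s _ => ?_
    rw [hp, ← tsum_mul_left]
  -- swap sum and tsum
  have step2 : ∑ s ∈ Finset.Icc 1 n, ∑' k : ℕ,
      (n.choose s : ℝ) * (-1) ^ (s + 1) * (2 * 3 ^ s - 2 ^ s) *
        (((3 + k : ℕ) : ℝ) ^ (n - s) / 2 ^ (k + 1))
      = ∑' k : ℕ, ∑ s ∈ Finset.Icc 1 n,
        (n.choose s : ℝ) * (-1) ^ (s + 1) * (2 * 3 ^ s - 2 ^ s) *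
          (((3 + k : ℕ) : ℝ) ^ (n - s) / 2 ^ (k + 1)) := by
    exact (Summable.tsum_finsetSum fun s _ => (sumq (n - s)).mul_left _).symm
  -- evaluate inner sum pointwise via `key`
  have step3 : ∀ k : ℕ, ∑ s ∈ Finset.Icc 1 n,
      (n.choose s : ℝ) * (-1) ^ (s + 1) * (2 * 3 ^ s - 2 ^ s) *
        (((3 + k : ℕ) : ℝ) ^ (n - s) / 2 ^ (k + 1))
      = ((3 + k : ℕ) : ℝ) ^ n / 2 ^ (k + 1)
        + (((1 + k : ℕ) : ℝ) ^ n / 2 ^ (k + 1) - 2 * ((k : ℝ) ^ n / 2 ^ (k + 1))) := by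
    intro k
    have h := key n (k : ℝ)
    have cast3 : ((3 + k : ℕ) : ℝ) = 3 + (k : ℝ) := by push_cast; ring
    have cast1 : ((1 + k : ℕ) : ℝ) = 1 + (k : ℝ) := by push_cast; ring
    rw [cast3, cast1]
    have : ∑ s ∈ Finset.Icc 1 n,
        (n.choose s : ℝ) * (-1) ^ (s + 1) * (2 * 3 ^ s - 2 ^ s) *
          ((3 + (k : ℝ)) ^ (n - s) / 2 ^ (k + 1))
        = (∑ s ∈ Finset.Icc 1 n,
          (n.choose s : ℝ) * (-1) ^ (s + 1) * (2 * 3 ^ s - 2 ^ s) * (3 + (k : ℝ)) ^ (n - s))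
            / 2 ^ (k + 1) := by
      rw [Finset.sum_div]
      exact Finset.sum_congr rfl fun s _ => by ring
    rw [this, h]
    ring
  -- summabilities for splitting the tsum
  have hq := sumq n
  have hq1 := sumq1 n
  have hgval : ∀ k : ℕ, 2 * ((k : ℝ) ^ n / 2 ^ (k + 1)) = (k : ℝ) ^ n / 2 ^ k := by
    intro k; rw [pow_succ]; ring
  have hg : Summable (fun k : ℕ => 2 * ((k : ℝ) ^ n / 2 ^ (k + 1))) :=
    (sumg n).congr fun k => (hgval k).symm
  -- the two tails cancel
  have cancel : ∑' k : ℕ, ((1 + k : ℕ) : ℝ) ^ n / 2 ^ (k + 1)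
      = ∑' k : ℕ, 2 * ((k : ℝ) ^ n / 2 ^ (k + 1)) := by
    have h0 := Summable.tsum_eq_zero_add (f := fun k : ℕ => (k : ℝ) ^ n / 2 ^ k) (sumg n)
    simp only [Nat.cast_zero, zero_pow (Nat.one_le_iff_ne_zero.mp hn), zero_div,
      zero_add] at h0
    calc ∑' k : ℕ, ((1 + k : ℕ) : ℝ) ^ n / 2 ^ (k + 1)
        = ∑' k : ℕ, ((k + 1 : ℕ) : ℝ) ^ n / 2 ^ (k + 1) := by
          refine tsum_congr fun k => by rw [add_comm 1 k]
      _ = ∑' k : ℕ, (k : ℝ) ^ n / 2 ^ k := h0.symm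
      _ = ∑' k : ℕ, 2 * ((k : ℝ) ^ n / 2 ^ (k + 1)) := tsum_congr fun k => (hgval k).symm
  rw [step1, step2, tsum_congr step3, Summable.tsum_add hq (hq1.sub hg),
    Summable.tsum_sub hq1 hg, cancel, sub_self, add_zero, hp]
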